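/- Let p > 2 be a real number. For all u ∈ [0,1], one has (1+u)/(1+u^p)^{1/p} ≥ 1 + (2^{1-1/p} − 1)·u. -/
import Mathlib

theorem stmt_2 (p : ℝ) (hp : 2 < p) (u : ℝ) (hu : u ∈ Set.Icc (0:ℝ) 1) :
    (1 + u) / (1 + u ^ p) ^ (1 / p) ≥ 1 + ((2:ℝ) ^ (1 - 1 / p) - 1) * u := by
  obtain ⟨hu0, hu1⟩ := hu
  have hp0 : (0:ℝ) < p := by linarith
  have h1p : (1:ℝ) ≤ p := by linarith
  have hip : 1/p ≤ 1 := by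
    rw [div_le_one hp0]; linarith
  have hip0 : 0 ≤ 1/p := by positivity
  set a : ℝ := (2:ℝ) ^ (1 - 1/p) with ha
  set b : ℝ := (2:ℝ) ^ (1/p) with hb
  have hab : a * b = 2 := by
    rw [ha, hb, ← Real.rpow_add (by norm_num)]
    norm_num
  have ha1 : 1 ≤ a := Real.one_le_rpow one_le_two (by linarith)
  have ha2 : a ≤ 2 := by
    have := Real.rpow_le_rpow_of_exponent_le (one_le_two (α := ℝ))
      (by linarith : 1 - 1/p ≤ 1)
    rwa [Real.rpow_one] at this
  have hb1 : 1 ≤ b := Real.one_le_rpow one_le_two hip0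
  -- Minkowski: (1 + u^p)^(1/p) ≤ 1 + (b-1)*u
  have hMink : (1 + u ^ p) ^ (1/p) ≤ 1 + (b - 1) * u := by
    have key := Real.Lp_add_le_of_nonneg (Finset.univ : Finset (Fin 2))
      (f := ![1 - u, 0]) (g := ![u, u]) h1p
      (by intro i _; fin_cases i <;> simp <;> linarith)
      (by intro i _; fin_cases i <;> simpa)
    simp only [Fin.sum_univ_two, Matrix.cons_val_zero, Matrix.cons_val_one, Matrix.head_cons]
      at key
    have h0p : (0:ℝ) ^ p = 0 := Real.zero_rpow (ne_of_gt hp0)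
    have e1 : ((1 - u) ^ p + (0:ℝ) ^ p) ^ (1/p) = 1 - u := by
      rw [h0p, add_zero, ← Real.rpow_mul (by linarith), mul_one_div,
        div_self (ne_of_gt hp0), Real.rpow_one]
    have e2 : (u ^ p + u ^ p) ^ (1/p) = b * u := by
      rw [show u ^ p + u ^ p = 2 * u ^ p by ring,
        Real.mul_rpow (by norm_num) (Real.rpow_nonneg hu0 p),
        ← Real.rpow_mul hu0, mul_one_div, div_self (ne_of_gt hp0), Real.rpow_one, hb]
    rw [e1, e2] at key
    calc (1 + u ^ p) ^ (1/p) = ((1 - u + u) ^ p + (0 + u) ^ p) ^ (1/p) := by norm_num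
      _ ≤ (1 - u) + b * u := key
      _ = 1 + (b - 1) * u := by ring
  have hApos : 0 < (1 + u ^ p) ^ (1/p) :=
    Real.rpow_pos_of_pos (by positivity) _
  have hbu : (0:ℝ) < 1 + (b - 1) * u := by nlinarith
  have step3 : (1 + (a - 1) * u) * (1 + (b - 1) * u) ≤ 1 + u := by
    nlinarith [mul_nonneg hu0 (sub_nonneg.2 hu1), mul_nonneg (sub_nonneg.2 ha1) (sub_nonneg.2 ha2),
      sq_nonneg u, mul_nonneg (mul_nonneg (sub_nonneg.2 ha1) (sub_nonneg.2 hb1)) hu0]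
  have h1 : 1 + (a - 1) * u ≤ (1 + u) / (1 + (b - 1) * u) := by
    rw [le_div_iff₀ hbu]; linarith [step3]
  have h2 : (1 + u) / (1 + (b - 1) * u) ≤ (1 + u) / (1 + u ^ p) ^ (1/p) :=
    div_le_div_of_nonneg_left (by linarith) hApos hMink
  calc (1 + u) / (1 + u ^ p) ^ (1/p) ≥ (1 + u) / (1 + (b - 1) * u) := h2
    _ ≥ 1 + (a - 1) * u := h1
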